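/- For a real polynomial p with all roots real, between any two consecutive distinct real roots of p there is exactly one root of p' (counted without multiplicity among the points that are not roots of p), and all roots of p' are real. -/

import Mathlib

open Polynomial

/-- If all complex roots of a real polynomial are real, then it has a full multiset
of real roots. -/
lemma card_roots_real_eq (p : ℝ[X]) (hp : p ≠ 0)
    (hreal : ∀ z : ℂ, Polynomial.aeval z p = 0 → z.im = 0) :
    Multiset.card p.roots = p.natDegree := by
  classical
  set f := algebraMap ℝ ℂ
  set q := p.map f with hqdef
  have hq : q ≠ 0 := by
    simpa [hqdef, Polynomial.map_ne_zero_iff (algebraMap ℝ ℂ).injective] using hp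
  have hcardq : Multiset.card q.roots = q.natDegree :=
    splits_iff_card_roots.mp (IsAlgClosed.splits q)
  have hdeg : q.natDegree = p.natDegree := natDegree_map_eq_of_injective f.injective p
  have him : ∀ z ∈ q.roots, z.im = 0 := by
    intro z hz
    have := (mem_roots hq).1 hz
    apply hreal
    rw [aeval_def, ← eval_map]
    exact this
  have hqroots : q.roots = (q.roots.map Complex.re).map (fun x : ℝ => (x : ℂ)) := by
    rw [Multiset.map_map]
    conv_lhs => rw [← Multiset.map_id q.roots]
    exact (Multiset.map_congr rfl fun z hz => by
      simp [Complex.ext_iff, him z hz]).symm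
  have hroots : p.roots = q.roots.map Complex.re := by
    refine Multiset.ext.mpr fun x => ?_
    rw [count_roots, eq_rootMultiplicity_map (f := f) f.injective x, ← count_roots,
      ← hqdef]
    conv_lhs => rw [hqroots]
    rw [show f x = ((x : ℝ) : ℂ) from rfl]
    exact Multiset.count_map_eq_count' _ _ Complex.ofReal_injective _
  rw [hroots, Multiset.card_map, hcardq, hdeg]

lemma no_two_deriv_roots (p : ℝ[X]) (hdeg : 2 ≤ p.natDegree)
    (hreal : ∀ z : ℂ, Polynomial.aeval z p = 0 → z.im = 0)
    (a b : ℝ) (hab : a < b) (ha : p.IsRoot a) (hb : p.IsRoot b)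
    (hno : ∀ x ∈ Set.Ioo a b, ¬ p.IsRoot x)
    (x y : ℝ) (hxy : x < y) (hx : x ∈ Set.Ioo a b) (hy : y ∈ Set.Ioo a b)
    (hx' : (derivative p).IsRoot x) (hy' : (derivative p).IsRoot y) : False := by
  classical
  have hp : p ≠ 0 := fun h => by simp [h] at hdeg
  have hn : Multiset.card p.roots = p.natDegree := card_roots_real_eq p hp hreal
  have hd' : derivative p ≠ 0 := by
    intro h
    have := p.card_roots_le_derivative
    rw [h] at this
    simp [hn] at this
    omega
  set S := p.roots.toFinset with hS
  set D := (derivative p).roots.toFinset with hD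
  have hmemS : ∀ z : ℝ, z ∈ S ↔ p.IsRoot z := by
    intro z; rw [hS, Multiset.mem_toFinset, mem_roots hp]
  have hmemD : ∀ z : ℝ, z ∈ D ↔ (derivative p).IsRoot z := by
    intro z; rw [hD, Multiset.mem_toFinset, mem_roots hd']
  have haS : a ∈ S := (hmemS a).2 ha
  have hbS : b ∈ S := (hmemS b).2 hb
  have hxD : x ∈ D := (hmemD x).2 hx'
  have hyD : y ∈ D := (hmemD y).2 hy'
  have hyS : y ∉ S := fun h => hno y hy ((hmemS y).1 h)
  -- interleaving with `y` removed
  have hcard : S.card ≤ ((D.erase y) \ S).card + 1 := by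
    refine Finset.card_le_diff_of_interleaved fun u hu v hv huv hgap => ?_
    by_cases hcase : u = a ∧ v = b
    · exact ⟨x, Finset.mem_erase.mpr ⟨hxy.ne, hxD⟩, hcase.1 ▸ hx.1, hcase.2 ▸ hx.2⟩
    · obtain ⟨z, hzmem, hz0⟩ := exists_deriv_eq_zero huv p.continuousOn
        (((hmemS u).1 hu).trans ((hmemS v).1 hv).symm)
      have hzD : z ∈ D := by
        rw [hmemD, IsRoot, ← p.deriv]
        exact hz0
      have hzy : z ≠ y := by
        rintro rfl
        -- z = y lies in Ioo u v and Ioo a b; deduce u = a, v = b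
        have hua : u ≤ a := by
          by_contra h
          push_neg at h
          exact hno u ⟨h, hzmem.1.trans hy.2⟩ ((hmemS u).1 hu)
        have hbv : b ≤ v := by
          by_contra h
          push_neg at h
          exact hno v ⟨hy.1.trans hzmem.2, h⟩ ((hmemS v).1 hv)
        have hua' : u = a := by
          rcases eq_or_lt_of_le hua with h | h
          · exact h
          · exact absurd (hgap a haS ⟨h, lt_of_lt_of_le hab hbv⟩) not_false
        have hbv' : v = b := by
          rcases eq_or_lt_of_le hbv with h | h
          · exact h.symm
          · exact absurd (hgap b hbS ⟨hua' ▸ hab, h⟩) not_false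
        exact hcase ⟨hua', hbv'⟩
      exact ⟨z, Finset.mem_erase.mpr ⟨hzy, hzD⟩, hzmem.1, hzmem.2⟩
  -- counting argument
  have hyDS : y ∈ D \ S := Finset.mem_sdiff.mpr ⟨hyD, hyS⟩
  have heq : (D.erase y) \ S = (D \ S).erase y := by
    ext z
    simp only [Finset.mem_erase, Finset.mem_sdiff]
    tauto
  have hk : S.card ≤ (D \ S).card := by
    rw [heq, Finset.card_erase_of_mem hyDS] at hcard
    have h1 : 1 ≤ (D \ S).card := Finset.card_pos.mpr ⟨y, hyDS⟩
    omega
  have h1 : ∑ z ∈ S, p.roots.count z = p.natDegree := by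
    rw [hS, Multiset.toFinset_sum_count_eq, hn]
  have h2 : ∑ z ∈ S, p.roots.count z = (∑ z ∈ S, (p.roots.count z - 1)) + S.card := by
    rw [Finset.card_eq_sum_ones, ← Finset.sum_add_distrib]
    refine Finset.sum_congr rfl fun z hz => ?_
    have : 1 ≤ p.roots.count z :=
      Multiset.one_le_count_iff_mem.mpr (Multiset.mem_toFinset.mp hz)
    omega
  have h3 : ∑ z ∈ S, (p.roots.count z - 1) ≤ ∑ z ∈ S, (derivative p).roots.count z := by
    refine Finset.sum_le_sum fun z _ => ?_
    rw [count_roots, count_roots]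
    exact p.rootMultiplicity_sub_one_le_derivative_rootMultiplicity z
  have h4 : (D \ S).card ≤ ∑ z ∈ D \ S, (derivative p).roots.count z := by
    rw [Finset.card_eq_sum_ones]
    exact Finset.sum_le_sum fun z hz =>
      Multiset.one_le_count_iff_mem.mpr
        (Multiset.mem_toFinset.mp (Finset.mem_sdiff.mp hz).1)
  have h5 : (∑ z ∈ S, (derivative p).roots.count z)
      + ∑ z ∈ D \ S, (derivative p).roots.count z
      = ∑ z ∈ S ∪ D, (derivative p).roots.count z := by
    rw [← Finset.sum_union Finset.disjoint_sdiff, Finset.union_sdiff_self_eq_union]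
  have h6 : ∑ z ∈ S ∪ D, (derivative p).roots.count z
      = Multiset.card (derivative p).roots := by
    rw [← Multiset.toFinset_sum_count_eq, ← hD]
    refine (Finset.sum_subset Finset.subset_union_right fun z _ hz => ?_).symm
    exact Multiset.count_eq_zero.mpr fun m => hz (Multiset.mem_toFinset.mpr m)
  have h7 : Multiset.card (derivative p).roots ≤ p.natDegree - 1 :=
    (card_roots' _).trans (natDegree_derivative_le p)
  omega

/-- For a real polynomial `p` of degree ≥ 2 with all complex roots real: every complex
root of `p'` is real, and between any two consecutive real roots of `p` there is exactly
one root of `p'`. -/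
theorem rolle_for_real_rooted (p : ℝ[X]) (hdeg : 2 ≤ p.natDegree)
    (hreal : ∀ z : ℂ, Polynomial.aeval z p = 0 → z.im = 0) :
    (∀ z : ℂ, Polynomial.aeval z (derivative p) = 0 → z.im = 0) ∧
    (∀ a b : ℝ, a < b → p.IsRoot a → p.IsRoot b →
      (∀ x ∈ Set.Ioo a b, ¬ p.IsRoot x) →
      ∃! x : ℝ, x ∈ Set.Ioo a b ∧ (derivative p).IsRoot x) := by
  have hp : p ≠ 0 := fun h => by simp [h] at hdeg
  have hn : Multiset.card p.roots = p.natDegree := card_roots_real_eq p hp hreal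
  have hd' : derivative p ≠ 0 := by
    intro h
    have := p.card_roots_le_derivative
    rw [h] at this
    simp [hn] at this
    omega
  constructor
  · -- all roots of p' are real
    have hcard : Multiset.card (derivative p).roots = (derivative p).natDegree := by
      have h1 := p.card_roots_le_derivative
      have h2 : Multiset.card (derivative p).roots ≤ (derivative p).natDegree :=
        card_roots' _
      have h3 : (derivative p).natDegree ≤ p.natDegree - 1 := natDegree_derivative_le p
      omega
    have hsplit : (derivative p).Splits := splits_iff_card_roots.mpr hcard
    intro z hz
    have hq' : (derivative p).map (algebraMap ℝ ℂ) ≠ 0 := by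
      simpa [Polynomial.map_ne_zero_iff (algebraMap ℝ ℂ).injective] using hd'
    have hzr : z ∈ ((derivative p).map (algebraMap ℝ ℂ)).roots := by
      rw [mem_roots hq', IsRoot, eval_map, ← aeval_def]
      exact hz
    rw [hsplit.roots_map] at hzr
    obtain ⟨w, -, rfl⟩ := Multiset.mem_map.mp hzr
    simp [Complex.ofReal_im]
  · intro a b hab ha hb hno
    obtain ⟨c, hc, hc0⟩ := exists_deriv_eq_zero hab p.continuousOn (ha.trans hb.symm)
    have hcroot : (derivative p).IsRoot c := by rw [IsRoot, ← p.deriv]; exact hc0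
    refine ⟨c, ⟨hc, hcroot⟩, fun y ⟨hy, hy'⟩ => ?_⟩
    by_contra hne
    rcases lt_or_gt_of_ne hne with h | h
    · exact no_two_deriv_roots p hdeg hreal a b hab ha hb hno y c h hy hc hy' hcroot
    · exact no_two_deriv_roots p hdeg hreal a b hab ha hb hno c y h hc hy hcroot hy'
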